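/- If a word w over an alphabet contains a fixed letter a, then w is a linear combination of elements of the form (a·qᵢ) ⧢ rᵢ where qᵢ, rᵢ are words and ⧢ denotes the shuffle product. -/
import Mathlib


/-- The list of all shuffles (interleavings) of two words. -/
def shuffles {α : Type*} : List α → List α → List (List α)
  | [], ys => [ys]
  | xs, [] => [xs]
  | x :: xs, y :: ys =>
      (shuffles xs (y :: ys)).map (x :: ·) ++ (shuffles (x :: xs) ys).map (y :: ·)
  termination_by xs ys => xs.length + ys.length

/-- Shuffle product of two words, as an element of the free vector space on words. -/
noncomputable def shOne {α : Type*} (u v : List α) : List α →₀ ℝ :=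
  ((shuffles u v).map (fun z => Finsupp.single z (1 : ℝ))).sum

theorem shuffles_nil_left {α : Type*} (ys : List α) : shuffles [] ys = [ys] := by
  cases ys <;> simp [shuffles]

theorem shuffles_nil_right {α : Type*} (xs : List α) : shuffles xs [] = [xs] := by
  cases xs <;> simp [shuffles]

theorem shuffles_cons {α : Type*} (x y : α) (xs ys : List α) :
    shuffles (x :: xs) (y :: ys) =
      (shuffles xs (y :: ys)).map (x :: ·) ++ (shuffles (x :: xs) ys).map (y :: ·) := by
  simp [shuffles]

theorem mem_shuffles_structure {α : Type*} (a : α) (q : List α) :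
    ∀ (ys z : List α), z ∈ shuffles (a :: q) ys →
      ∃ k t, k ≤ ys.length ∧ t ∈ shuffles q (ys.drop k) ∧ z = ys.take k ++ a :: t := by
  intro ys
  induction ys with
  | nil =>
    intro z hz
    rw [shuffles_nil_right] at hz
    simp at hz
    exact ⟨0, q, by simp [hz, shuffles_nil_right]⟩
  | cons y ys' ih =>
    intro z hz
    rw [shuffles_cons] at hz
    rcases List.mem_append.1 hz with h | h
    · obtain ⟨t, ht, rfl⟩ := List.mem_map.1 h
      exact ⟨0, t, by simp [ht]⟩
    · obtain ⟨z', hz', rfl⟩ := List.mem_map.1 h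
      obtain ⟨k, t, hk, ht, rfl⟩ := ih z' hz'
      exact ⟨k + 1, t, by simpa using hk, ht, by simp⟩

theorem append_mem_shuffles {α : Type*} : ∀ (ys xs : List α), ys ++ xs ∈ shuffles xs ys := by
  intro ys
  induction ys with
  | nil => intro xs; rw [shuffles_nil_right]; simp
  | cons y ys' ih =>
    intro xs
    cases xs with
    | nil => rw [shuffles_nil_left]; simp
    | cons x xs' =>
      rw [shuffles_cons]
      refine List.mem_append.2 (Or.inr ?_)
      exact List.mem_map.2 ⟨ys' ++ x :: xs', ih _, by simp⟩

theorem sum_sub_smul_mem {α : Type*}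
    (w : List α) (S : Submodule ℝ (List α →₀ ℝ)) :
    ∀ (L : List (List α)), (∀ z ∈ L, z = w ∨ Finsupp.single z (1:ℝ) ∈ S) →
      ∃ c : ℕ, (w ∈ L → 0 < c) ∧
        (L.map (fun z => Finsupp.single z (1 : ℝ))).sum
          - (c : ℝ) • Finsupp.single w (1:ℝ) ∈ S := by
  intro L
  induction L with
  | nil => intro _; exact ⟨0, by simp, by simp⟩
  | cons z L' ih =>
    intro h
    have hz := h z (by simp)
    obtain ⟨c, hc, hcS⟩ := ih (fun z hz => h z (by simp [hz]))
    by_cases hzw : z = w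
    · subst hzw
      refine ⟨c + 1, fun _ => Nat.succ_pos c, ?_⟩
      rw [List.map_cons, List.sum_cons]
      push_cast
      have heq : Finsupp.single z (1:ℝ) + (L'.map (fun z => Finsupp.single z (1 : ℝ))).sum
          - ((c : ℝ) + 1) • Finsupp.single z (1:ℝ)
          = (L'.map (fun z => Finsupp.single z (1 : ℝ))).sum
            - (c : ℝ) • Finsupp.single z (1:ℝ) := by
        rw [add_smul]; module
      rw [heq]
      exact hcS
    · rcases hz with rfl | hz
      · exact absurd rfl hzw
      have hmem' : w ∈ z :: L' → 0 < c := by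
        intro hw
        rcases List.mem_cons.1 hw with h | h
        · exact absurd h.symm hzw
        · exact hc h
      refine ⟨c, hmem', ?_⟩
      rw [List.map_cons, List.sum_cons, add_sub_assoc]
      exact S.add_mem hz hcS

/-- If a word `w` contains the letter `a`, then `w` is a linear combination of elements
of the form `(a·q) ⧢ r` with `q, r` words. -/
theorem word_mem_span_shuffles {α : Type*} (a : α) (w : List α) (ha : a ∈ w) :
    Finsupp.single w (1 : ℝ) ∈ Submodule.span ℝ
      {f : List α →₀ ℝ | ∃ q r : List α, f = shOne (a :: q) r} := by
  classical
  set S : Submodule ℝ (List α →₀ ℝ) :=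
    Submodule.span ℝ {f : List α →₀ ℝ | ∃ q r : List α, f = shOne (a :: q) r} with hS
  have key : ∀ n : ℕ, ∀ p q : List α, p.length = n →
      Finsupp.single (p ++ a :: q) (1 : ℝ) ∈ S := by
    intro n
    induction n using Nat.strong_induction_on with
    | _ n IH =>
      intro p q hn
      set w' : List α := p ++ a :: q with hw'
      set L : List (List α) := shuffles (a :: q) p with hL
      have hmem : ∀ z ∈ L, z = w' ∨ Finsupp.single z (1:ℝ) ∈ S := by
        intro z hzL
        obtain ⟨k, t, hk, ht, rfl⟩ := mem_shuffles_structure a q p z hzL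
        rcases lt_or_eq_of_le hk with hlt | heq
        · right
          have hlen : (p.take k).length = k := by simp [Nat.min_eq_left hk]
          exact IH k (hn ▸ hlt) (p.take k) t hlen
        · left
          rw [heq, List.drop_length, shuffles_nil_right] at ht
          simp at ht
          rw [heq, List.take_length, ht]
      have hsh : shOne (a :: q) p ∈ S := by
        apply Submodule.subset_span
        exact ⟨q, p, rfl⟩
      obtain ⟨c, hc, hsub⟩ := sum_sub_smul_mem w' S L hmem
      have hcount : (c : ℝ) • Finsupp.single w' (1:ℝ) ∈ S := by
        have heq : (c : ℝ) • Finsupp.single w' (1:ℝ)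
            = shOne (a :: q) p - ((L.map (fun z => Finsupp.single z (1 : ℝ))).sum
              - (c : ℝ) • Finsupp.single w' (1:ℝ)) := by
          rw [shOne]; abel
        rw [heq]
        exact S.sub_mem hsh hsub
      have hpos : 0 < c := hc (append_mem_shuffles p (a :: q))
      have hne : (c : ℝ) ≠ 0 := by positivity
      have hfin := S.smul_mem (c : ℝ)⁻¹ hcount
      rwa [smul_smul, inv_mul_cancel₀ hne, one_smul] at hfin
  obtain ⟨p, q, rfl⟩ := List.append_of_mem ha
  exact key p.length p q rfl
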